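/- arXiv:2206.12442 — 2 statements merged into one kernel-verified Lean document; each statement's English description precedes it below -/
import Mathlib

section
/- If n ≥ 5, then there is no surjective group homomorphism from SL₂(𝔽_p) onto Sₙ for any prime p. -/
open Matrix

section aux
variable {p : ℕ} [Fact p.Prime]

private def Emat (t : ZMod p) : Matrix.SpecialLinearGroup (Fin 2) (ZMod p) :=
  ⟨!![1, t; 0, 1], by simp [Matrix.det_fin_two_of]⟩

private def Fmat (t : ZMod p) : Matrix.SpecialLinearGroup (Fin 2) (ZMod p) :=
  ⟨!![1, 0; t, 1], by simp [Matrix.det_fin_two_of]⟩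

private lemma SLval_mul (A B : Matrix.SpecialLinearGroup (Fin 2) (ZMod p)) :
    (A * B).1 = A.1 * B.1 := rfl

private lemma Emat_mul_Emat (s t : ZMod p) : Emat s * Emat t = Emat (t + s) := by
  apply Subtype.ext
  rw [SLval_mul]
  simp [Emat, Matrix.mul_fin_two]

private lemma Fmat_mul_Fmat (s t : ZMod p) : Fmat s * Fmat t = Fmat (s + t) := by
  apply Subtype.ext
  rw [SLval_mul]
  simp [Fmat, Matrix.mul_fin_two]

private lemma znz2 (hp2 : p ≠ 2) : (2 : ZMod p) ≠ 0 := by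
  intro h
  have h2 : ((2 : ℕ) : ZMod p) = 0 := by exact_mod_cast h
  have : p ∣ 2 := (ZMod.natCast_eq_zero_iff 2 p).mp h2
  exact hp2 ((Nat.prime_dvd_prime_iff_eq (Fact.out) Nat.prime_two).mp this)

private lemma f_Emat (hp2 : p ≠ 2) (f : Matrix.SpecialLinearGroup (Fin 2) (ZMod p) →* ℤˣ)
    (t : ZMod p) : f (Emat t) = 1 := by
  have h2 := znz2 hp2
  have h : Emat (t * (2:ZMod p)⁻¹) * Emat (t * (2:ZMod p)⁻¹) = Emat t := by
    rw [Emat_mul_Emat]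
    congr 1
    calc t * 2⁻¹ + t * 2⁻¹ = t * 2 * 2⁻¹ := by ring
      _ = t := by rw [mul_assoc, mul_inv_cancel₀ h2, mul_one]
  calc f (Emat t) = f (Emat (t * 2⁻¹)) ^ 2 := by rw [← h, _root_.map_mul, sq]
    _ = 1 := Int.units_sq _

private lemma f_Fmat (hp2 : p ≠ 2) (f : Matrix.SpecialLinearGroup (Fin 2) (ZMod p) →* ℤˣ)
    (t : ZMod p) : f (Fmat t) = 1 := by
  have h2 := znz2 hp2
  have h : Fmat (t * (2:ZMod p)⁻¹) * Fmat (t * (2:ZMod p)⁻¹) = Fmat t := by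
    rw [Fmat_mul_Fmat]
    congr 1
    calc t * 2⁻¹ + t * 2⁻¹ = t * 2 * 2⁻¹ := by ring
      _ = t := by rw [mul_assoc, mul_inv_cancel₀ h2, mul_one]
  calc f (Fmat t) = f (Fmat (t * 2⁻¹)) ^ 2 := by rw [← h, _root_.map_mul, sq]
    _ = 1 := Int.units_sq _

private lemma decomp (M : Matrix.SpecialLinearGroup (Fin 2) (ZMod p))
    (hc : M.1 1 0 ≠ 0) :
    M = Emat ((M.1 0 0 - 1) * (M.1 1 0)⁻¹) * Fmat (M.1 1 0) *
        Emat ((M.1 1 1 - 1) * (M.1 1 0)⁻¹) := by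
  have hdet : M.1 0 0 * M.1 1 1 - M.1 0 1 * M.1 1 0 = 1 := by
    have h := M.2
    rwa [Matrix.det_fin_two] at h
  apply Subtype.ext
  rw [SLval_mul, SLval_mul]
  set a := M.1 0 0 with ha; set b := M.1 0 1 with hb
  set c := M.1 1 0 with hcc; set d := M.1 1 1 with hd
  ext i j
  fin_cases i <;> fin_cases j <;>
    simp [Emat, Fmat, Matrix.mul_apply, Fin.sum_univ_two, ← ha, ← hb, ← hcc, ← hd]
  · field_simp
    ring
  · field_simp
    linear_combination -hdet
  · field_simp
    ring

end aux

/-- If `n ≥ 5`, there is no surjective group homomorphism from `SL₂(𝔽_p)` onto `Sₙ`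
for any prime `p`. -/
theorem stmt_1 (n p : ℕ) (hn : 5 ≤ n) (hp : p.Prime) :
    ¬ ∃ φ : Matrix.SpecialLinearGroup (Fin 2) (ZMod p) →* Equiv.Perm (Fin n),
      Function.Surjective φ := by
  haveI : Fact p.Prime := ⟨hp⟩
  rintro ⟨φ, hφ⟩
  by_cases hp2 : p = 2
  · subst hp2
    have hcard : Fintype.card (Equiv.Perm (Fin n)) ≤
        Fintype.card (Matrix.SpecialLinearGroup (Fin 2) (ZMod 2)) :=
      Fintype.card_le_of_surjective φ hφ
    have h6 : Fintype.card (Matrix.SpecialLinearGroup (Fin 2) (ZMod 2)) = 6 := by decide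
    have h120 : 120 ≤ Fintype.card (Equiv.Perm (Fin n)) := by
      rw [Fintype.card_perm, Fintype.card_fin]
      calc 120 = Nat.factorial 5 := rfl
        _ ≤ Nat.factorial n := Nat.factorial_le hn
    omega
  · -- p odd: compose with sign
    set f := (Equiv.Perm.sign).comp φ with hf
    haveI : Nontrivial (Fin n) := Fin.nontrivial_iff_two_le.mpr (by omega)
    have hfsurj : Function.Surjective f :=
      (Equiv.Perm.sign_surjective (Fin n)).comp hφ
    obtain ⟨M, hM⟩ := hfsurj (-1)
    have hone : f M = 1 := by
      by_cases hc : M.1 1 0 ≠ 0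
      · rw [decomp M hc, _root_.map_mul, _root_.map_mul,
          f_Emat hp2 f, f_Fmat hp2 f, f_Emat hp2 f]
        simp
      · push_neg at hc
        have key : f (M * Fmat 1) = 1 := by
          have hc' : (M * Fmat 1).1 1 0 ≠ 0 := by
            have hdet : M.1 0 0 * M.1 1 1 - M.1 0 1 * M.1 1 0 = 1 := by
              have h := M.2
              rwa [Matrix.det_fin_two] at h
            rw [SLval_mul]
            simp [Fmat, Matrix.mul_apply, Fin.sum_univ_two]
            intro h
            have h11 : M.1 1 1 = 0 := by rwa [hc, zero_add] at h
            rw [h11, hc] at hdet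
            simp at hdet
          rw [decomp _ hc', _root_.map_mul, _root_.map_mul,
            f_Emat hp2 f, f_Fmat hp2 f, f_Emat hp2 f]
          simp
        have : f M * f (Fmat 1) = 1 := by rw [← _root_.map_mul]; exact key
        rwa [f_Fmat hp2 f, mul_one] at this
    rw [hM] at hone
    exact absurd hone (by decide)
end

section
/- Let ζ be a primitive twelfth root of unity and let φ : SL₂(ℤ) → SL₂(ℤ[ζ]) be the homomorphism determined by φ(T) = [[ζ,0],[0,ζ⁻¹]] and φ(S) = [[−ζ³,1],[0,ζ³]], where T = [[1,1],[0,1]] and S = [[0,−1],[1,0]]. Then the image of φ equals { [[u, u·v],[0, u⁻¹]] : u a twelfth root of unity, v ∈ ℤζ ⊕ ℤζ³ }. -/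
open Matrix

section Aux

open MatrixGroups

lemma SL2Z_gen : Subgroup.closure ({ModularGroup.S, ModularGroup.T} : Set (SL(2,ℤ))) = ⊤ := by
  rw [eq_top_iff]
  intro γ _
  set H := Subgroup.closure ({ModularGroup.S, ModularGroup.T} : Set (SL(2,ℤ))) with hH
  have hS : ModularGroup.S ∈ H := Subgroup.subset_closure (by simp)
  have hT : ModularGroup.T ∈ H := Subgroup.subset_closure (by simp)
  suffices h : ∀ n : ℕ, ∀ γ : SL(2,ℤ), (γ 1 0).natAbs = n → γ ∈ H from h _ γ rfl
  intro n
  induction n using Nat.strong_induction_on with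
  | _ n ih =>
    intro γ hn
    rcases eq_or_ne (γ 1 0) 0 with hc | hc
    · have hdet : γ 0 0 * γ 1 1 - γ 0 1 * γ 1 0 = 1 := by
        rw [← Matrix.det_fin_two]; exact γ.2
      rw [hc, mul_zero, sub_zero] at hdet
      rcases Int.mul_eq_one_iff_eq_one_or_neg_one.mp hdet with ⟨ha, hd⟩ | ⟨ha, hd⟩
      · have : γ = ModularGroup.T ^ (γ 0 1) := by
          apply Subtype.ext
          rw [ModularGroup.coe_T_zpow]
          ext i j
          fin_cases i <;> fin_cases j <;> simp [ha, hd, hc]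
        rw [this]; exact zpow_mem hT _
      · have : γ = ModularGroup.S * ModularGroup.S * ModularGroup.T ^ (-(γ 0 1)) := by
          apply Subtype.ext
          rw [Matrix.SpecialLinearGroup.coe_mul, Matrix.SpecialLinearGroup.coe_mul,
            ModularGroup.S_mul_S_eq, ModularGroup.coe_T_zpow]
          ext i j
          fin_cases i <;> fin_cases j <;> simp [ha, hd, hc]
        rw [this]
        exact mul_mem (mul_mem hS hS) (zpow_mem hT _)
    · set q : ℤ := -(γ 0 0 / γ 1 0) with hq
      set γ' := ModularGroup.S * (ModularGroup.T ^ q * γ) with hγ'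
      have key : γ' 1 0 = γ 0 0 % γ 1 0 := by
        have h1 : (ModularGroup.T ^ q * γ) 0 0 = γ 0 0 + q * γ 1 0 := by
          show ((ModularGroup.T ^ q * γ : SL(2,ℤ)) : Matrix (Fin 2) (Fin 2) ℤ) 0 0 = _
          rw [Matrix.SpecialLinearGroup.coe_mul, ModularGroup.coe_T_zpow]
          simp [Matrix.mul_apply, Fin.sum_univ_succ]
        have h2 : γ' 1 0 = (ModularGroup.T ^ q * γ) 0 0 := by
          show ((γ' : SL(2,ℤ)) : Matrix (Fin 2) (Fin 2) ℤ) 1 0 = _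
          rw [hγ', Matrix.SpecialLinearGroup.coe_mul, ModularGroup.coe_S]
          simp [Matrix.mul_apply, Fin.sum_univ_succ]
        rw [h2, h1, hq, Int.emod_def]; ring
      have hlt : (γ' 1 0).natAbs < n := by
        rw [key]
        have h3 : 0 ≤ γ 0 0 % γ 1 0 := Int.emod_nonneg _ hc
        have h4 : γ 0 0 % γ 1 0 < |γ 1 0| := by
          rw [Int.abs_eq_natAbs]; exact Int.emod_lt _ hc
        rw [← hn]
        rw [Int.abs_eq_natAbs] at h4
        omega
      have hmem : γ' ∈ H := ih _ hlt γ' rfl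
      have : γ = (ModularGroup.T ^ q)⁻¹ * (ModularGroup.S⁻¹ * γ') := by
        rw [hγ']; group
      rw [this]
      exact mul_mem (inv_mem (zpow_mem hT _)) (mul_mem (inv_mem hS) hmem)

lemma diag_pow {R : Type*} [CommRing R] (x y : R) (k : ℕ) :
    (!![x, 0; 0, y] : Matrix (Fin 2) (Fin 2) R) ^ k = !![x ^ k, 0; 0, y ^ k] := by
  induction k with
  | zero => simp [Matrix.one_fin_two]
  | succ k ih =>
      rw [pow_succ, ih, Matrix.mul_fin_two]
      ext i j
      fin_cases i <;> fin_cases j <;> simp [pow_succ]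

lemma unip_zpow {R : Type*} [CommRing R] (w : (Matrix (Fin 2) (Fin 2) R)ˣ) (x : R)
    (hw : (w : Matrix (Fin 2) (Fin 2) R) = !![1, x; 0, 1]) (n : ℤ) :
    ((w ^ n : (Matrix (Fin 2) (Fin 2) R)ˣ) : Matrix (Fin 2) (Fin 2) R) = !![1, n • x; 0, 1] := by
  have h1 : (w : Matrix (Fin 2) (Fin 2) R) * !![1, -x; 0, 1] = 1 := by
    rw [hw, Matrix.mul_fin_two]
    ext i j; fin_cases i <;> fin_cases j <;> simp [Matrix.one_fin_two]
  have hinv : ((w⁻¹ : (Matrix (Fin 2) (Fin 2) R)ˣ) : Matrix (Fin 2) (Fin 2) R)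
      = !![1, -x; 0, 1] := by
    calc (w⁻¹ : (Matrix (Fin 2) (Fin 2) R)ˣ).val
        = (w⁻¹).val * ((w).val * !![1, -x; 0, 1]) := by rw [h1, mul_one]
      _ = ((w⁻¹).val * w.val) * !![1, -x; 0, 1] := by rw [mul_assoc]
      _ = !![1, -x; 0, 1] := by
          rw [← Units.val_mul, inv_mul_cancel, Units.val_one, one_mul]
  induction n using Int.induction_on with
  | zero => simp [Matrix.one_fin_two]
  | succ k ihk =>
      rw [_root_.zpow_add, zpow_one, Units.val_mul, ihk, hw, Matrix.mul_fin_two]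
      ext i j
      fin_cases i <;> fin_cases j <;> simp [add_smul] <;> ring
  | pred k ihk =>
      rw [_root_.zpow_sub, zpow_one, Units.val_mul, ihk, hinv, Matrix.mul_fin_two]
      ext i j
      fin_cases i <;> fin_cases j <;> simp [sub_smul] <;> ring

end Aux

/-- The matrix `T = [[1,1],[0,1]]` in `SL₂(ℤ)`. -/
def stmtT : Matrix.SpecialLinearGroup (Fin 2) ℤ :=
  ⟨!![1, 1; 0, 1], by norm_num [Matrix.det_fin_two_of]⟩

/-- The matrix `S = [[0,-1],[1,0]]` in `SL₂(ℤ)`. -/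
def stmtS : Matrix.SpecialLinearGroup (Fin 2) ℤ :=
  ⟨!![0, -1; 1, 0], by norm_num [Matrix.det_fin_two_of]⟩

/-- The ring of integers `ℤ[ζ₁₂]` of the twelfth cyclotomic field. -/
noncomputable abbrev Zzeta12 : Type := NumberField.RingOfIntegers (CyclotomicField 12 ℚ)

set_option maxHeartbeats 2000000 in
/-- Let `ζ` be a primitive twelfth root of unity in `𝒪 = ℤ[ζ₁₂]` and let
`φ : SL₂(ℤ) → SL₂(𝒪)` (realized in the units of the `2×2` matrix ring over `𝒪`) satisfy
`φ(T) = [[ζ,0],[0,ζ⁻¹]]` and `φ(S) = [[-ζ³,1],[0,ζ³]]` (here `ζ⁻¹ = ζ¹¹`).  Then the image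
of `φ` is `{ [[u, u·v],[0, u⁻¹]] : u¹² = 1, v ∈ ℤζ ⊕ ℤζ³ }`. -/
theorem stmt_5 (ζ : Zzeta12) (hζ : IsPrimitiveRoot ζ 12)
    (φ : Matrix.SpecialLinearGroup (Fin 2) ℤ →* (Matrix (Fin 2) (Fin 2) Zzeta12)ˣ)
    (hT : ((φ stmtT : (Matrix (Fin 2) (Fin 2) Zzeta12)ˣ) : Matrix (Fin 2) (Fin 2) Zzeta12)
      = !![ζ, 0; 0, ζ ^ 11])
    (hS : ((φ stmtS : (Matrix (Fin 2) (Fin 2) Zzeta12)ˣ) : Matrix (Fin 2) (Fin 2) Zzeta12)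
      = !![-ζ ^ 3, 1; 0, ζ ^ 3]) :
    Set.range (fun γ =>
        ((φ γ : (Matrix (Fin 2) (Fin 2) Zzeta12)ˣ) : Matrix (Fin 2) (Fin 2) Zzeta12))
      = { M : Matrix (Fin 2) (Fin 2) Zzeta12 | ∃ u v : Zzeta12, u ^ 12 = 1 ∧
          v ∈ Submodule.span ℤ ({ζ, ζ ^ 3} : Set Zzeta12) ∧ M = !![u, u * v; 0, u ^ 11] } := by
  haveI : NeZero (12 : ℕ) := ⟨by norm_num⟩
  have h12 : ζ ^ 12 = 1 := hζ.pow_eq_one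
  have h6 : ζ ^ 6 = -1 := by
    have h0 : (ζ ^ 6 - 1) * (ζ ^ 6 + 1) = 0 := by linear_combination h12
    rcases mul_eq_zero.mp h0 with h | h
    · exact absurd (sub_eq_zero.mp h)
        (hζ.pow_ne_one_of_pos_of_lt (by norm_num) (by norm_num))
    · linear_combination h
  have h4 : ζ ^ 4 = ζ ^ 2 - 1 := by
    have h0 : (ζ ^ 2 + 1) * (ζ ^ 4 - ζ ^ 2 + 1) = 0 := by linear_combination h6
    rcases mul_eq_zero.mp h0 with h | h
    · exact absurd (by linear_combination (ζ ^ 2 - 1) * h)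
        (hζ.pow_ne_one_of_pos_of_lt (l := 4) (by norm_num) (by norm_num))
    · linear_combination h
  set Msp := Submodule.span ℤ ({ζ, ζ ^ 3} : Set Zzeta12) with hMsp
  have hζM : ζ ∈ Msp := Submodule.subset_span (by simp)
  have hζ3M : ζ ^ 3 ∈ Msp := Submodule.subset_span (by simp)
  have hmul2 : ∀ v ∈ Msp, ζ ^ 2 * v ∈ Msp := by
    intro v hv
    induction hv using Submodule.span_induction with
    | mem x hx =>
        simp only [Set.mem_insert_iff, Set.mem_singleton_iff] at hx
        rcases hx with h | h
        · rw [h, show ζ ^ 2 * ζ = ζ ^ 3 by ring]; exact hζ3M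
        · rw [h, show ζ ^ 2 * ζ ^ 3 = ζ ^ 3 - ζ by linear_combination ζ * h4]
          exact sub_mem hζ3M hζM
    | zero => simp
    | add x y hx hy ihx ihy => rw [mul_add]; exact add_mem ihx ihy
    | smul a x hx ihx => rw [mul_smul_comm]; exact Submodule.smul_mem _ _ ihx
  have hsq : ∀ u : Zzeta12, u ^ 12 = 1 → ∀ v ∈ Msp, u ^ 2 * v ∈ Msp := by
    intro u hu v hv
    obtain ⟨k, -, rfl⟩ := hζ.eq_pow_of_pow_eq_one hu
    rw [show (ζ ^ k) ^ 2 * v = (ζ ^ 2) ^ k * v by ring]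
    clear hu
    induction k with
    | zero => simpa using hv
    | succ k ihk =>
        rw [show (ζ ^ 2) ^ (k + 1) * v = ζ ^ 2 * ((ζ ^ 2) ^ k * v) by ring]
        exact hmul2 _ ihk
  have hA : ((φ (stmtT * stmtT * stmtS * stmtT) : (Matrix (Fin 2) (Fin 2) Zzeta12)ˣ) :
      Matrix (Fin 2) (Fin 2) Zzeta12) = !![1, ζ; 0, 1] := by
    rw [_root_.map_mul, _root_.map_mul, _root_.map_mul, Units.val_mul, Units.val_mul, Units.val_mul, hT, hS]
    refine Matrix.ext fun i j => ?_
    fin_cases i <;> fin_cases j <;>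
      simp [Matrix.mul_apply, Fin.sum_univ_succ] <;>
      first
        | linear_combination -h6
        | linear_combination ζ * h12
        | linear_combination (ζ ^ 24 + ζ ^ 12 + 1) * h12
        | ring
  have hB : ((φ (stmtT * stmtT * stmtT * stmtS) : (Matrix (Fin 2) (Fin 2) Zzeta12)ˣ) :
      Matrix (Fin 2) (Fin 2) Zzeta12) = !![1, ζ ^ 3; 0, 1] := by
    rw [_root_.map_mul, _root_.map_mul, _root_.map_mul, Units.val_mul, Units.val_mul, Units.val_mul, hT, hS]
    refine Matrix.ext fun i j => ?_
    fin_cases i <;> fin_cases j <;>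
      simp [Matrix.mul_apply, Fin.sum_univ_succ] <;>
      first
        | linear_combination -h6
        | linear_combination ζ * h12
        | linear_combination (ζ ^ 24 + ζ ^ 12 + 1) * h12
        | ring
  have hgen : Subgroup.closure ({stmtS, stmtT} : Set (Matrix.SpecialLinearGroup (Fin 2) ℤ)) = ⊤ :=
    SL2Z_gen
  ext X
  simp only [Set.mem_range, Set.mem_setOf_eq]
  constructor
  · rintro ⟨γ, rfl⟩
    have hγtop : γ ∈ Subgroup.closure ({stmtS, stmtT} :
        Set (Matrix.SpecialLinearGroup (Fin 2) ℤ)) := by rw [hgen]; trivial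
    induction hγtop using Subgroup.closure_induction with
    | mem x hx =>
        simp only [Set.mem_insert_iff, Set.mem_singleton_iff] at hx
        rcases hx with rfl | rfl
        · refine ⟨-ζ ^ 3, ζ ^ 3, by linear_combination (ζ ^ 24 + ζ ^ 12 + 1) * h12, hζ3M, ?_⟩
          rw [hS]
          refine Matrix.ext fun i j => ?_
          fin_cases i <;> fin_cases j <;> simp <;>
            first
              | linear_combination h6
              | linear_combination ζ ^ 3 * h6 + (ζ ^ 21 + ζ ^ 9) * h12
              | ring
        · refine ⟨ζ, 0, h12, zero_mem _, ?_⟩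
          rw [hT]; norm_num
    | one =>
        refine ⟨1, 0, one_pow _, zero_mem _, ?_⟩
        rw [_root_.map_one, Units.val_one]
        refine Matrix.ext fun i j => ?_
        fin_cases i <;> fin_cases j <;> simp [Matrix.one_fin_two]
    | mul x y hx hy ihx ihy =>
        obtain ⟨u, v, hu, hv, hxe⟩ := ihx
        obtain ⟨u', v', hu', hv', hye⟩ := ihy
        refine ⟨u * u', v' + (u' ^ 5) ^ 2 * v, by rw [mul_pow, hu, hu', mul_one],
          add_mem hv' (hsq (u' ^ 5) (by rw [pow_right_comm, hu', one_pow]) v hv), ?_⟩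
        rw [_root_.map_mul, Units.val_mul, hxe, hye, Matrix.mul_fin_two]
        refine Matrix.ext fun i j => ?_
        fin_cases i <;> fin_cases j <;> simp <;> ring
    | inv x hx ihx =>
        obtain ⟨u, v, hu, hvM, he⟩ := ihx
        have h13 : u ^ 13 = u := by
          calc u ^ 13 = u ^ 12 * u := by ring
            _ = u := by rw [hu, one_mul]
        have h121 : u ^ 121 = u := by
          calc u ^ 121 = (u ^ 12) ^ 10 * u := by ring
            _ = u := by rw [hu, one_pow, one_mul]
        refine ⟨u ^ 11, -(u ^ 2 * v), by rw [pow_right_comm, hu, one_pow],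
          neg_mem (hsq u hu v hvM), ?_⟩
        rw [_root_.map_inv, Matrix.coe_units_inv, he]
        have hdet : (!![u, u * v; 0, u ^ 11] : Matrix (Fin 2) (Fin 2) Zzeta12).det = 1 := by
          rw [Matrix.det_fin_two_of]; linear_combination hu
        rw [Matrix.inv_def, hdet, Ring.inverse_one, one_smul, Matrix.adjugate_fin_two_of]
        refine Matrix.ext fun i j => ?_
        fin_cases i <;> fin_cases j <;> simp <;>
          first
            | linear_combination v * h13
            | linear_combination -v * h13
            | linear_combination -h121
            | linear_combination h121
            | ring
  · rintro ⟨u, v, hu, hv, rfl⟩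
    obtain ⟨k, -, rfl⟩ := hζ.eq_pow_of_pow_eq_one hu
    rw [hMsp, Submodule.mem_span_pair] at hv
    obtain ⟨a, b, rfl⟩ := hv
    refine ⟨stmtT ^ k * (stmtT * stmtT * stmtS * stmtT) ^ a
      * (stmtT * stmtT * stmtT * stmtS) ^ b, ?_⟩
    rw [_root_.map_mul, _root_.map_mul, _root_.map_pow, _root_.map_zpow, _root_.map_zpow, Units.val_mul, Units.val_mul,
      Units.val_pow_eq_pow_val, hT, diag_pow, unip_zpow _ ζ hA a, unip_zpow _ (ζ ^ 3) hB b]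
    rw [Matrix.mul_fin_two, Matrix.mul_fin_two]
    refine Matrix.ext fun i j => ?_
    fin_cases i <;> fin_cases j <;> simp [zsmul_eq_mul] <;> ring
end
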